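/- Let d and n be positive integers with n ≥ 1, let ε > 0, and set Δ = 4 + 4√d + d. Let (y, x) and (y', x') be two datasets with y, y' : Fin n → ℝ, x, x' : Fin n → Fin (d+1) → ℝ that agree on all samples except the last one, and suppose every sample in both datasets is standardized: |y_i| ≤ 1, x_{i0} = 1, and |x_{ij}| ≤ 1/√d for j ∈ {1,…,d}. Define for each dataset the SEV weights w_1 = −5n/2, w_q = 2n, w_{q²} = −(1/2)(n + ∑_i y_i²), w_{p_j q} = ∑_i y_i x_{ij} (j = 0,…,d), w_{p_j²} = −(1/2) ∑_i x_{ij}² (j = 0,…,d), and w_{p_j p_h} = −(1/2) ∑_i x_{ij} x_{ih} (j ≠ h). Then for every choice of real target values t_• , one for each weight index, the product over all weight indices of the Laplace densities (ε/(2Δ)) exp(−ε|t_• − w_•^D|/Δ) is at most exp(ε) times the product over all weight indices of (ε/(2Δ)) exp(−ε|t_• − w_•^{D'}|/Δ). -/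

import Mathlib

open Finset

/-- The Laplace density with zero mean and scale `Δ/ε`, evaluated at `t`. -/
noncomputable def lapDensity (ε Δ t : ℝ) : ℝ :=
  (ε / (2 * Δ)) * Real.exp (-(ε * |t|) / Δ)

lemma lap_nonneg (ε Δ : ℝ) (hε : 0 ≤ ε) (hΔ : 0 ≤ Δ) (t : ℝ) :
    0 ≤ lapDensity ε Δ t := by
  unfold lapDensity; positivity

lemma lap_ratio (ε Δ : ℝ) (hε : 0 < ε) (hΔ : 0 < Δ) (t a b c : ℝ)
    (hab : |a - b| ≤ c) :
    lapDensity ε Δ (t - a) ≤ Real.exp (ε * c / Δ) * lapDensity ε Δ (t - b) := by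
  have key : Real.exp (-(ε * |t - a|) / Δ)
      ≤ Real.exp (ε * c / Δ) * Real.exp (-(ε * |t - b|) / Δ) := by
    rw [← Real.exp_add]
    apply Real.exp_le_exp.mpr
    have h0 : |t - b| - |t - a| ≤ |a - b| := by
      have h1 := abs_sub_abs_le_abs_sub (t - b) (t - a)
      have h2 : t - b - (t - a) = a - b := by ring
      rw [h2] at h1; exact h1
    rw [← add_div, div_le_div_iff_of_pos_right hΔ]
    nlinarith [mul_le_mul_of_nonneg_left (h0.trans hab) hε.le]
  have hc : (0:ℝ) ≤ ε / (2 * Δ) := by positivity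
  calc lapDensity ε Δ (t - a)
      = (ε / (2 * Δ)) * Real.exp (-(ε * |t - a|) / Δ) := rfl
    _ ≤ (ε / (2 * Δ)) * (Real.exp (ε * c / Δ) * Real.exp (-(ε * |t - b|) / Δ)) :=
        mul_le_mul_of_nonneg_left key hc
    _ = Real.exp (ε * c / Δ) * lapDensity ε Δ (t - b) := by
        unfold lapDensity; ring

lemma prod_step {ι : Type*} (s : Finset ι) (ε Δ : ℝ) (f g S : ι → ℝ)
    (hf : ∀ i ∈ s, 0 ≤ f i)
    (h : ∀ i ∈ s, f i ≤ Real.exp (ε * S i / Δ) * g i) :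
    (∏ i ∈ s, f i) ≤ Real.exp (ε * (∑ i ∈ s, S i) / Δ) * ∏ i ∈ s, g i := by
  calc ∏ i ∈ s, f i ≤ ∏ i ∈ s, (Real.exp (ε * S i / Δ) * g i) :=
      Finset.prod_le_prod hf h
    _ = (∏ i ∈ s, Real.exp (ε * S i / Δ)) * ∏ i ∈ s, g i := Finset.prod_mul_distrib
    _ = Real.exp (ε * (∑ i ∈ s, S i) / Δ) * ∏ i ∈ s, g i := by
        rw [← Real.exp_sum]
        congr 2
        rw [← Finset.sum_div, ← Finset.mul_sum]

lemma prod_ratio {ι : Type*} (s : Finset ι) (ε Δ : ℝ) (hε : 0 < ε) (hΔ : 0 < Δ)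
    (t a b c : ι → ℝ) (h : ∀ i ∈ s, |a i - b i| ≤ c i) :
    (∏ i ∈ s, lapDensity ε Δ (t i - a i))
      ≤ Real.exp (ε * (∑ i ∈ s, c i) / Δ) * ∏ i ∈ s, lapDensity ε Δ (t i - b i) :=
  prod_step s ε Δ _ _ c (fun i _ => lap_nonneg ε Δ hε.le hΔ.le _)
    (fun i hi => lap_ratio ε Δ hε hΔ _ _ _ _ (h i hi))

lemma diff_single {n : ℕ} (hn : 1 ≤ n) (f g : Fin n → ℝ)
    (h : ∀ i : Fin n, (i : ℕ) + 1 < n → f i = g i) :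
    (∑ i, f i) - (∑ i, g i) = f ⟨n - 1, by omega⟩ - g ⟨n - 1, by omega⟩ := by
  rw [← Finset.sum_sub_distrib]
  apply Finset.sum_eq_single_of_mem _ (Finset.mem_univ _)
  intro i _ hi
  have hlt : (i : ℕ) + 1 < n := by
    have h1 := i.isLt
    have h2 : (i : ℕ) ≠ n - 1 := fun he => hi (Fin.ext (by simpa using he))
    omega
  rw [h i hlt, sub_self]

set_option maxHeartbeats 1000000 in
/-- Proposition 3: the density-ratio inequality establishing that the
differentially private SEV regression (Algorithm 1) satisfies
ε-differential privacy. -/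
theorem sev_dp_density_ratio (n d : ℕ) (hn : 1 ≤ n) (hd : 0 < d)
    (ε : ℝ) (hε : 0 < ε) (Δ : ℝ) (hΔ : Δ = 4 + 4 * Real.sqrt d + d)
    (y y' : Fin n → ℝ) (x x' : Fin n → Fin (d + 1) → ℝ)
    (hagree : ∀ i : Fin n, (i : ℕ) + 1 < n → y i = y' i ∧ ∀ j, x i j = x' i j)
    (hy : ∀ i, |y i| ≤ 1) (hy' : ∀ i, |y' i| ≤ 1)
    (hx0 : ∀ i, x i 0 = 1) (hx0' : ∀ i, x' i 0 = 1)
    (hx : ∀ i, ∀ j : Fin (d + 1), j ≠ 0 → |x i j| ≤ 1 / Real.sqrt d)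
    (hx' : ∀ i, ∀ j : Fin (d + 1), j ≠ 0 → |x' i j| ≤ 1 / Real.sqrt d)
    (t1 tq tq2 : ℝ) (tpq tp2 : Fin (d + 1) → ℝ)
    (tpp : Fin (d + 1) → Fin (d + 1) → ℝ) :
    lapDensity ε Δ (t1 - (-(5 * (n : ℝ)) / 2))
      * lapDensity ε Δ (tq - 2 * (n : ℝ))
      * lapDensity ε Δ (tq2 - (-(1 / 2) * ((n : ℝ) + ∑ i, (y i) ^ 2)))
      * (∏ j, lapDensity ε Δ (tpq j - ∑ i, y i * x i j))
      * (∏ j, lapDensity ε Δ (tp2 j - (-(1 / 2) * ∑ i, (x i j) ^ 2)))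
      * (∏ j, ∏ h ∈ Finset.univ.erase j,
          lapDensity ε Δ (tpp j h - (-(1 / 2) * ∑ i, x i j * x i h)))
    ≤ Real.exp ε *
      (lapDensity ε Δ (t1 - (-(5 * (n : ℝ)) / 2))
        * lapDensity ε Δ (tq - 2 * (n : ℝ))
        * lapDensity ε Δ (tq2 - (-(1 / 2) * ((n : ℝ) + ∑ i, (y' i) ^ 2)))
        * (∏ j, lapDensity ε Δ (tpq j - ∑ i, y' i * x' i j))
        * (∏ j, lapDensity ε Δ (tp2 j - (-(1 / 2) * ∑ i, (x' i j) ^ 2)))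
        * (∏ j, ∏ h ∈ Finset.univ.erase j,
            lapDensity ε Δ (tpp j h - (-(1 / 2) * ∑ i, x' i j * x' i h)))) := by
  set s : ℝ := Real.sqrt d with hsdef
  have hs0 : 0 < s := Real.sqrt_pos.mpr (by exact_mod_cast hd)
  have hs2 : s ^ 2 = d := Real.sq_sqrt (by positivity)
  have hΔ0 : 0 < Δ := by rw [hΔ]; positivity
  -- the per-coordinate bound on entries
  set B : Fin (d + 1) → ℝ := fun j => if j = 0 then 1 else 1 / s with hBdef
  have hB0 : ∀ j, 0 ≤ B j := by
    intro j; by_cases h : j = 0 <;> simp [hBdef, h] <;> positivity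
  have hxB : ∀ i j, |x i j| ≤ B j := by
    intro i j; by_cases h : j = 0
    · simp [hBdef, h, hx0 i]
    · simpa [hBdef, h] using hx i j h
  have hxB' : ∀ i j, |x' i j| ≤ B j := by
    intro i j; by_cases h : j = 0
    · simp [hBdef, h, hx0' i]
    · simpa [hBdef, h] using hx' i j h
  -- sums of B
  have hSB : ∑ j, B j = 1 + s := by
    rw [Fin.sum_univ_succ]
    have h1 : (B 0 : ℝ) = 1 := by simp [hBdef]
    have h2 : ∀ i : Fin d, B i.succ = 1 / s := by
      intro i; simp [hBdef, Fin.succ_ne_zero]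
    rw [h1]
    simp only [h2, Finset.sum_const, Finset.card_univ, Fintype.card_fin, nsmul_eq_mul]
    congr 1
    field_simp
    nlinarith [hs2]
  have hSB2 : ∑ j, B j ^ 2 = 2 := by
    rw [Fin.sum_univ_succ]
    have h1 : (B 0 : ℝ) ^ 2 = 1 := by simp [hBdef]
    have h2 : ∀ i : Fin d, B i.succ ^ 2 = 1 / s ^ 2 := by
      intro i
      have hb : B i.succ = 1 / s := by simp [hBdef, Fin.succ_ne_zero]
      rw [hb]; ring
    rw [h1]
    simp only [h2, Finset.sum_const, Finset.card_univ, Fintype.card_fin, nsmul_eq_mul]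
    rw [hs2]
    have hd0 : (d : ℝ) ≠ 0 := by positivity
    rw [mul_one_div, div_self hd0]
    norm_num
  -- the distinguished index
  set m : Fin n := ⟨n - 1, by omega⟩ with hmdef
  have hym : |y m| ≤ 1 := hy m
  have hym' : |y' m| ≤ 1 := hy' m
  -- sensitivity bounds
  have h3 : |(-(1 / 2) * ((n : ℝ) + ∑ i, (y i) ^ 2))
      - (-(1 / 2) * ((n : ℝ) + ∑ i, (y' i) ^ 2))| ≤ 1 := by
    have hdiff : (∑ i, (y i) ^ 2) - (∑ i, (y' i) ^ 2) = (y m) ^ 2 - (y' m) ^ 2 :=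
      diff_single hn _ _ (fun i hi => by rw [(hagree i hi).1])
    have e1 : (-(1 / 2) * ((n : ℝ) + ∑ i, (y i) ^ 2))
        - (-(1 / 2) * ((n : ℝ) + ∑ i, (y' i) ^ 2))
        = -(1 / 2) * ((∑ i, (y i) ^ 2) - (∑ i, (y' i) ^ 2)) := by ring
    rw [e1, hdiff]
    have b1 : (y m) ^ 2 ≤ 1 := by nlinarith [abs_nonneg (y m), sq_abs (y m)]
    have b2 : (y' m) ^ 2 ≤ 1 := by nlinarith [abs_nonneg (y' m), sq_abs (y' m)]
    rw [abs_le]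
    constructor <;> nlinarith [sq_nonneg (y m), sq_nonneg (y' m)]
  have h4 : ∀ j, |(∑ i, y i * x i j) - (∑ i, y' i * x' i j)| ≤ 2 * B j := by
    intro j
    have hdiff : (∑ i, y i * x i j) - (∑ i, y' i * x' i j)
        = y m * x m j - y' m * x' m j :=
      diff_single hn _ _ (fun i hi => by rw [(hagree i hi).1, (hagree i hi).2 j])
    rw [hdiff]
    calc |y m * x m j - y' m * x' m j|
        ≤ |y m * x m j| + |y' m * x' m j| := abs_sub _ _
      _ = |y m| * |x m j| + |y' m| * |x' m j| := by rw [abs_mul, abs_mul]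
      _ ≤ 1 * B j + 1 * B j :=
          add_le_add (mul_le_mul hym (hxB m j) (abs_nonneg _) zero_le_one)
            (mul_le_mul hym' (hxB' m j) (abs_nonneg _) zero_le_one)
      _ = 2 * B j := by ring
  have h5 : ∀ j, |(-(1 / 2) * ∑ i, (x i j) ^ 2) - (-(1 / 2) * ∑ i, (x' i j) ^ 2)|
      ≤ B j ^ 2 := by
    intro j
    have hdiff : (∑ i, (x i j) ^ 2) - (∑ i, (x' i j) ^ 2)
        = (x m j) ^ 2 - (x' m j) ^ 2 :=
      diff_single hn _ _ (fun i hi => by rw [(hagree i hi).2 j])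
    have e1 : (-(1 / 2) * ∑ i, (x i j) ^ 2) - (-(1 / 2) * ∑ i, (x' i j) ^ 2)
        = -(1 / 2) * ((∑ i, (x i j) ^ 2) - (∑ i, (x' i j) ^ 2)) := by ring
    rw [e1, hdiff]
    have b1 : (x m j) ^ 2 ≤ B j ^ 2 := by
      nlinarith [hxB m j, abs_nonneg (x m j), sq_abs (x m j), hB0 j]
    have b2 : (x' m j) ^ 2 ≤ B j ^ 2 := by
      nlinarith [hxB' m j, abs_nonneg (x' m j), sq_abs (x' m j), hB0 j]
    rw [abs_le]
    constructor <;> nlinarith [sq_nonneg (x m j), sq_nonneg (x' m j)]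
  have h6 : ∀ j h : Fin (d + 1),
      |(-(1 / 2) * ∑ i, x i j * x i h) - (-(1 / 2) * ∑ i, x' i j * x' i h)|
        ≤ B j * B h := by
    intro j h
    have hdiff : (∑ i, x i j * x i h) - (∑ i, x' i j * x' i h)
        = x m j * x m h - x' m j * x' m h :=
      diff_single hn _ _ (fun i hi => by rw [(hagree i hi).2 j, (hagree i hi).2 h])
    have e1 : (-(1 / 2) * ∑ i, x i j * x i h) - (-(1 / 2) * ∑ i, x' i j * x' i h)
        = -(1 / 2) * ((∑ i, x i j * x i h) - (∑ i, x' i j * x' i h)) := by ring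
    rw [e1, hdiff]
    have b1 : |x m j * x m h| ≤ B j * B h := by
      rw [abs_mul]
      exact mul_le_mul (hxB m j) (hxB m h) (abs_nonneg _) (hB0 j)
    have b2 : |x' m j * x' m h| ≤ B j * B h := by
      rw [abs_mul]
      exact mul_le_mul (hxB' m j) (hxB' m h) (abs_nonneg _) (hB0 j)
    have t1 : |x m j * x m h - x' m j * x' m h|
        ≤ |x m j * x m h| + |x' m j * x' m h| := abs_sub _ _
    rw [abs_le] at b1 b2 ⊢
    constructor <;> nlinarith [abs_nonneg (x m j * x m h)]
  -- the three product inequalities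
  have P3 : lapDensity ε Δ (tq2 - (-(1 / 2) * ((n : ℝ) + ∑ i, (y i) ^ 2)))
      ≤ Real.exp (ε * 1 / Δ)
        * lapDensity ε Δ (tq2 - (-(1 / 2) * ((n : ℝ) + ∑ i, (y' i) ^ 2))) :=
    lap_ratio ε Δ hε hΔ0 _ _ _ _ h3
  have P4 : (∏ j, lapDensity ε Δ (tpq j - ∑ i, y i * x i j))
      ≤ Real.exp (ε * (2 + 2 * s) / Δ)
        * ∏ j, lapDensity ε Δ (tpq j - ∑ i, y' i * x' i j) := by
    have := prod_ratio Finset.univ ε Δ hε hΔ0 tpq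
      (fun j => ∑ i, y i * x i j) (fun j => ∑ i, y' i * x' i j)
      (fun j => 2 * B j) (fun j _ => h4 j)
    have hsum : ∑ j, 2 * B j = 2 + 2 * s := by
      rw [← Finset.mul_sum, hSB]; ring
    rwa [hsum] at this
  have P5 : (∏ j, lapDensity ε Δ (tp2 j - (-(1 / 2) * ∑ i, (x i j) ^ 2)))
      ≤ Real.exp (ε * 2 / Δ)
        * ∏ j, lapDensity ε Δ (tp2 j - (-(1 / 2) * ∑ i, (x' i j) ^ 2)) := by
    have := prod_ratio Finset.univ ε Δ hε hΔ0 tp2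
      (fun j => -(1 / 2) * ∑ i, (x i j) ^ 2) (fun j => -(1 / 2) * ∑ i, (x' i j) ^ 2)
      (fun j => B j ^ 2) (fun j _ => h5 j)
    rwa [hSB2] at this
  have P6 : (∏ j, ∏ h ∈ Finset.univ.erase j,
        lapDensity ε Δ (tpp j h - (-(1 / 2) * ∑ i, x i j * x i h)))
      ≤ Real.exp (ε * ((1 + s) ^ 2 - 2) / Δ)
        * ∏ j, ∏ h ∈ Finset.univ.erase j,
            lapDensity ε Δ (tpp j h - (-(1 / 2) * ∑ i, x' i j * x' i h)) := by
    have inner : ∀ j : Fin (d + 1),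
        (∏ h ∈ Finset.univ.erase j,
          lapDensity ε Δ (tpp j h - (-(1 / 2) * ∑ i, x i j * x i h)))
        ≤ Real.exp (ε * (∑ h ∈ Finset.univ.erase j, B j * B h) / Δ)
          * ∏ h ∈ Finset.univ.erase j,
              lapDensity ε Δ (tpp j h - (-(1 / 2) * ∑ i, x' i j * x' i h)) :=
      fun j => prod_ratio _ ε Δ hε hΔ0 (tpp j)
        (fun h => -(1 / 2) * ∑ i, x i j * x i h)
        (fun h => -(1 / 2) * ∑ i, x' i j * x' i h)
        (fun h => B j * B h) (fun h _ => h6 j h)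
    have step := prod_step Finset.univ ε Δ
      (fun j => ∏ h ∈ Finset.univ.erase j,
        lapDensity ε Δ (tpp j h - (-(1 / 2) * ∑ i, x i j * x i h)))
      (fun j => ∏ h ∈ Finset.univ.erase j,
        lapDensity ε Δ (tpp j h - (-(1 / 2) * ∑ i, x' i j * x' i h)))
      (fun j => ∑ h ∈ Finset.univ.erase j, B j * B h)
      (fun j _ => Finset.prod_nonneg fun h _ => lap_nonneg ε Δ hε.le hΔ0.le _)
      (fun j _ => inner j)
    have hsum : ∑ j, ∑ h ∈ Finset.univ.erase j, B j * B h = (1 + s) ^ 2 - 2 := by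
      have e : ∀ j : Fin (d + 1), ∑ h ∈ Finset.univ.erase j, B j * B h
          = B j * (1 + s) - B j * B j := by
        intro j
        rw [← Finset.mul_sum, Finset.sum_erase_eq_sub (Finset.mem_univ j), hSB]
        ring
      simp only [e]
      rw [Finset.sum_sub_distrib, ← Finset.sum_mul, hSB]
      have : ∑ j, B j * B j = 2 := by
        rw [← hSB2]; congr 1; funext j; ring
      rw [this]; ring
    rwa [hsum] at step
  -- combine
  have nlap : ∀ t : ℝ, 0 ≤ lapDensity ε Δ t := lap_nonneg ε Δ hε.le hΔ0.le
  set L1 := lapDensity ε Δ (t1 - (-(5 * (n : ℝ)) / 2)) with hL1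
  set L2 := lapDensity ε Δ (tq - 2 * (n : ℝ)) with hL2
  set L3 := lapDensity ε Δ (tq2 - (-(1 / 2) * ((n : ℝ) + ∑ i, (y i) ^ 2))) with hL3
  set L4 := ∏ j, lapDensity ε Δ (tpq j - ∑ i, y i * x i j) with hL4
  set L5 := ∏ j, lapDensity ε Δ (tp2 j - (-(1 / 2) * ∑ i, (x i j) ^ 2)) with hL5
  set L6 := ∏ j, ∏ h ∈ Finset.univ.erase j,
      lapDensity ε Δ (tpp j h - (-(1 / 2) * ∑ i, x i j * x i h)) with hL6
  set R3 := lapDensity ε Δ (tq2 - (-(1 / 2) * ((n : ℝ) + ∑ i, (y' i) ^ 2))) with hR3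
  set R4 := ∏ j, lapDensity ε Δ (tpq j - ∑ i, y' i * x' i j) with hR4
  set R5 := ∏ j, lapDensity ε Δ (tp2 j - (-(1 / 2) * ∑ i, (x' i j) ^ 2)) with hR5
  set R6 := ∏ j, ∏ h ∈ Finset.univ.erase j,
      lapDensity ε Δ (tpp j h - (-(1 / 2) * ∑ i, x' i j * x' i h)) with hR6
  have nL1 : 0 ≤ L1 := nlap _
  have nL2 : 0 ≤ L2 := nlap _
  have nL4 : 0 ≤ L4 := Finset.prod_nonneg fun _ _ => nlap _
  have nL5 : 0 ≤ L5 := Finset.prod_nonneg fun _ _ => nlap _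
  have nL6 : 0 ≤ L6 := Finset.prod_nonneg fun _ _ =>
    Finset.prod_nonneg fun _ _ => nlap _
  have nR3 : 0 ≤ R3 := nlap _
  have nR4 : 0 ≤ R4 := Finset.prod_nonneg fun _ _ => nlap _
  have nR5 : 0 ≤ R5 := Finset.prod_nonneg fun _ _ => nlap _
  have nR6 : 0 ≤ R6 := Finset.prod_nonneg fun _ _ =>
    Finset.prod_nonneg fun _ _ => nlap _
  have key : L3 * L4 * L5 * L6
      ≤ Real.exp ε * (R3 * R4 * R5 * R6) := by
    have k1 : L3 * L4 ≤ (Real.exp (ε * 1 / Δ) * R3) * (Real.exp (ε * (2 + 2 * s) / Δ) * R4) :=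
      mul_le_mul P3 P4 nL4 (mul_nonneg (Real.exp_pos _).le nR3)
    have k2 : L3 * L4 * L5 ≤ ((Real.exp (ε * 1 / Δ) * R3) * (Real.exp (ε * (2 + 2 * s) / Δ) * R4))
        * (Real.exp (ε * 2 / Δ) * R5) :=
      mul_le_mul k1 P5 nL5 (mul_nonneg (mul_nonneg (Real.exp_pos _).le nR3) (mul_nonneg (Real.exp_pos _).le nR4))
    have k3 : L3 * L4 * L5 * L6
        ≤ ((Real.exp (ε * 1 / Δ) * R3) * (Real.exp (ε * (2 + 2 * s) / Δ) * R4))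
          * (Real.exp (ε * 2 / Δ) * R5) * (Real.exp (ε * ((1 + s) ^ 2 - 2) / Δ) * R6) :=
      mul_le_mul k2 P6 nL6 (mul_nonneg (mul_nonneg (mul_nonneg (Real.exp_pos _).le nR3) (mul_nonneg (Real.exp_pos _).le nR4)) (mul_nonneg (Real.exp_pos _).le nR5))
    have eexp : Real.exp (ε * 1 / Δ) * Real.exp (ε * (2 + 2 * s) / Δ)
        * Real.exp (ε * 2 / Δ) * Real.exp (ε * ((1 + s) ^ 2 - 2) / Δ) = Real.exp ε := by
      rw [← Real.exp_add, ← Real.exp_add, ← Real.exp_add]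
      congr 1
      have hsumΔ : (1 : ℝ) + (2 + 2 * s) + 2 + ((1 + s) ^ 2 - 2) = Δ := by
        rw [hΔ, ← hs2]; ring
      field_simp
      nlinarith [hsumΔ]
    calc L3 * L4 * L5 * L6
        ≤ ((Real.exp (ε * 1 / Δ) * R3) * (Real.exp (ε * (2 + 2 * s) / Δ) * R4))
          * (Real.exp (ε * 2 / Δ) * R5) * (Real.exp (ε * ((1 + s) ^ 2 - 2) / Δ) * R6) := k3
      _ = (Real.exp (ε * 1 / Δ) * Real.exp (ε * (2 + 2 * s) / Δ)
            * Real.exp (ε * 2 / Δ) * Real.exp (ε * ((1 + s) ^ 2 - 2) / Δ))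
          * (R3 * R4 * R5 * R6) := by ring
      _ = Real.exp ε * (R3 * R4 * R5 * R6) := by rw [eexp]
  calc L1 * L2 * L3 * L4 * L5 * L6
      = (L1 * L2) * (L3 * L4 * L5 * L6) := by ring
    _ ≤ (L1 * L2) * (Real.exp ε * (R3 * R4 * R5 * R6)) :=
        mul_le_mul_of_nonneg_left key (mul_nonneg nL1 nL2)
    _ = Real.exp ε * (L1 * L2 * R3 * R4 * R5 * R6) := by ring
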